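/- The class K(Γ) = {finite L_Γ-trees A : A ≅ Γ(n) for some n ≥ 1} has the disjoint amalgamation property: for A₀, A₁, A₂ ∈ K(Γ) and embeddings f_i : A₀ → A_i (i = 1,2), there exist B ∈ K(Γ) and embeddings j_i : A_i → B with j₁∘f₁ = j₂∘f₂ and j₁[A₁] ∩ j₂[A₂] = j₁∘f₁[A₀]. -/

import Mathlib

/-- A tree plan: a finite set of nodes of `ω^{<ω}` together with a labeling,
`lab σ = true` meaning `λ(σ) = ∞` and `lab σ = false` meaning `λ(σ) = 1`. -/
structure TreePlan where
  nodes : Finset (List ℕ)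
  lab : List ℕ → Bool

/-- The conditions making the data of a `TreePlan` an actual tree plan:
it contains the root, is closed under predecessor, and the root is not an infinity-node. -/
def IsTreePlan (Γ : TreePlan) : Prop :=
  [] ∈ Γ.nodes ∧ (∀ σ ∈ Γ.nodes, σ.dropLast ∈ Γ.nodes) ∧ Γ.lab [] = false

/-- The projection `π` forgetting the second coordinates. -/
def piX {S : Type*} (a : List (ℕ × Option S)) : List ℕ := a.map Prod.fst

/-- The tree `Γ(X)`, for `X` a set in an ambient type `S`.  Entries are pairs `(i, t)`
where `t = none` codes `★` (at nodes with `λ = 1`) and `t = some x` with `x ∈ X`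
at infinity-nodes. -/
def GammaSet (Γ : TreePlan) {S : Type*} (X : Set S) : Set (List (ℕ × Option S)) :=
  {a | piX a ∈ Γ.nodes ∧ ∀ (k : ℕ) (hk : k < a.length),
    (Γ.lab ((piX a).take (k + 1)) = false → (a.get ⟨k, hk⟩).2 = none) ∧
    (Γ.lab ((piX a).take (k + 1)) = true → ∃ x ∈ X, (a.get ⟨k, hk⟩).2 = some x)}

/-- `Γ(ω)`, realized with `X = ℕ`. -/
def GammaOmega (Γ : TreePlan) : Set (List (ℕ × Option ℕ)) :=
  GammaSet Γ (Set.univ : Set ℕ)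

/-- `Γ(n) = Γ([n])` with `[n] = {0, …, n-1} ⊆ ℕ`. -/
def GammaN (Γ : TreePlan) (n : ℕ) : Set (List (ℕ × Option ℕ)) :=
  GammaSet Γ {k : ℕ | k < n}

/-- `↓B`, the downward closure of `B` in `Γ(X)` with respect to the
initial-segment order. -/
def downSet (Γ : TreePlan) {S : Type*} (X : Set S) (B : Set (List (ℕ × Option S))) :
    Set (List (ℕ × Option S)) :=
  {a ∈ GammaSet Γ X | ∃ b ∈ B, a <+: b}

/-- The approximations to the tree closure. -/
def tclAux (Γ : TreePlan) {S : Type*} (X : Set S) (B : Set (List (ℕ × Option S))) :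
    ℕ → Set (List (ℕ × Option S))
  | 0 => insert [] (downSet Γ X B)
  | n + 1 => tclAux Γ X B n ∪
      {a ∈ GammaSet Γ X | Γ.lab (piX a) = false ∧ a.dropLast ∈ tclAux Γ X B n}

/-- The tree closure `tcl(B)` of `B ⊆ Γ(X)`. -/
def tcl (Γ : TreePlan) {S : Type*} (X : Set S) (B : Set (List (ℕ × Option S))) :
    Set (List (ℕ × Option S)) :=
  ⋃ n, tclAux Γ X B n

/-- Longest common prefix of two lists: the meet in the tree of sequences. -/
def lcp {α : Type*} [DecidableEq α] : List α → List α → List α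
  | a :: as, b :: bs => if a = b then a :: lcp as bs else []
  | _, _ => []

/-- Embedding of `L_Γ`-structures between subsets `A`, `B` of trees of sequences:
an injection preserving the order (initial segment), the root, the predecessor,
the meet, and the predicates `P_σ` (i.e. the projection `π`). -/
structure IsGEmb (Γ : TreePlan) {S T : Type*} [DecidableEq S] [DecidableEq T]
    (A : Set (List (ℕ × Option S))) (B : Set (List (ℕ × Option T)))
    (h : List (ℕ × Option S) → List (ℕ × Option T)) : Prop where
  maps : ∀ a ∈ A, h a ∈ B
  inj : ∀ a ∈ A, ∀ b ∈ A, h a = h b → a = b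
  map_root : h [] = []
  map_le : ∀ a ∈ A, ∀ b ∈ A, (a <+: b ↔ h a <+: h b)
  map_pred : ∀ a ∈ A, h a.dropLast = (h a).dropLast
  map_meet : ∀ a ∈ A, ∀ b ∈ A, h (lcp a b) = lcp (h a) (h b)
  map_P : ∀ a ∈ A, piX (h a) = piX a

open Classical in
/-- `I(Γ, σ)`: the number of infinity-nodes `τ ∈ Γ` with `τ ≤ σ`. -/
noncomputable def Icount (Γ : TreePlan) (σ : List ℕ) : ℕ :=
  (Γ.nodes.filter fun τ => Γ.lab τ = true ∧ τ <+: σ).card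

open Classical in
/-- The relative tree plan `Γ_σ = {τ : σ⌢τ ∈ Γ}` with induced labeling. -/
noncomputable def TreePlan.sub (Γ : TreePlan) (σ : List ℕ) : TreePlan where
  nodes := (Γ.nodes.filter fun τ => σ <+: τ).image (List.drop σ.length)
  lab := fun τ => if τ = [] then false else Γ.lab (σ ++ τ)

open Classical in
/-- The successors of the root of `Γ`. -/
noncomputable def rootSuccs (Γ : TreePlan) : Finset ℕ :=
  (Γ.nodes.filter fun σ => σ.length = 1).image fun σ => σ.headI

/-- `deg(Γ) = max {I(Γ,σ) : σ ∈ Γ}`. -/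
noncomputable def degPlan (Γ : TreePlan) : ℕ := Γ.nodes.sup fun σ => Icount Γ σ

open Classical in
/-- `A(Γ)`: the number of nodes of `Γ` of maximal degree. -/
noncomputable def Acoef (Γ : TreePlan) : ℕ :=
  (Γ.nodes.filter fun σ => Icount Γ σ = degPlan Γ).card

set_option linter.unusedSectionVars false

/-! ### Auxiliary lemmas -/

section Aux

variable {α : Type*} [DecidableEq α]

omit [DecidableEq α] in
theorem aux_prefix_antisymm {l₁ l₂ : List α} (h1 : l₁ <+: l₂) (h2 : l₂ <+: l₁) : l₁ = l₂ :=
  h1.eq_of_length (le_antisymm h1.length_le h2.length_le)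

omit [DecidableEq α] in
theorem aux_take_eq_of_prefix {l₁ l₂ : List α} (h : l₁ <+: l₂) {m : ℕ} (hm : m ≤ l₁.length) :
    l₁.take m = l₂.take m := by
  rw [List.prefix_iff_eq_take.mp h, List.take_take, min_eq_left hm]

theorem lcp_prefix_left : ∀ a b : List α, lcp a b <+: a
  | [], [] => by simp [lcp]
  | [], _ :: _ => by simp [lcp]
  | _ :: _, [] => by simp [lcp]
  | a :: as, b :: bs => by
    simp only [lcp]
    split
    · exact List.cons_prefix_cons.mpr ⟨rfl, lcp_prefix_left as bs⟩
    · exact List.nil_prefix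

theorem lcp_prefix_right : ∀ a b : List α, lcp a b <+: b
  | [], [] => by simp [lcp]
  | [], _ :: _ => by simp [lcp]
  | _ :: _, [] => by simp [lcp]
  | a :: as, b :: bs => by
    simp only [lcp]
    split
    · next h => exact List.cons_prefix_cons.mpr ⟨h, lcp_prefix_right as bs⟩
    · exact List.nil_prefix

theorem prefix_lcp : ∀ (u a b : List α), u <+: a → u <+: b → u <+: lcp a b
  | [], _, _, _, _ => List.nil_prefix
  | x :: u, [], _, ha, _ => absurd ha (by simp)
  | x :: u, _ :: _, [], _, hb => absurd hb (by simp)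
  | x :: u, y :: a, z :: b, ha, hb => by
    rw [List.cons_prefix_cons] at ha hb
    obtain ⟨rfl, ha⟩ := ha
    obtain ⟨rfl, hb⟩ := hb
    simpa [lcp, List.cons_prefix_cons] using prefix_lcp u a b ha hb

theorem lcp_eq_left {a b : List α} (h : a <+: b) : lcp a b = a :=
  aux_prefix_antisymm (lcp_prefix_left a b) (prefix_lcp a a b List.prefix_rfl h)

theorem lcp_eq_right {a b : List α} (h : b <+: a) : lcp a b = b :=
  aux_prefix_antisymm (lcp_prefix_right a b) (prefix_lcp b a b h List.prefix_rfl)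

/-- If two lists agree up to `m` and differ at `m`, the lcp is the common take. -/
theorem lcp_eq_take {u v : List α} {m : ℕ} (ht : u.take m = v.take m)
    (hmu : m < u.length) (hmv : m < v.length) (hne : u[m] ≠ v[m]) :
    lcp u v = u.take m := by
  have h1 : u.take m <+: lcp u v := by
    refine prefix_lcp _ _ _ (List.take_prefix m u) ?_
    rw [ht]; exact List.take_prefix m v
  have h2 : (lcp u v).length ≤ m := by
    by_contra hlt
    push_neg at hlt
    have hu := lcp_prefix_left u v
    have hv := lcp_prefix_right u v
    have e1 : (lcp u v)[m]'hlt = u[m] := hu.getElem hlt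
    have e2 : (lcp u v)[m]'hlt = v[m] := hv.getElem hlt
    exact hne (e1 ▸ e2)
  refine aux_prefix_antisymm ?_ h1
  have : lcp u v = u.take (lcp u v).length := List.prefix_iff_eq_take.mp (lcp_prefix_left u v)
  rw [this]
  calc u.take (lcp u v).length = (u.take m).take (lcp u v).length := by
        rw [List.take_take, min_eq_left h2]
    _ <+: u.take m := List.take_prefix _ _

/-- Conversely, if the lcp has length `m` and both lists are longer, they differ at `m`. -/
theorem lcp_get_ne {u v : List α} {m : ℕ} (hl : (lcp u v).length = m)
    (hmu : m < u.length) (hmv : m < v.length) : u[m] ≠ v[m] := by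
  intro heq
  have htu : lcp u v = u.take m := by
    rw [List.prefix_iff_eq_take.mp (lcp_prefix_left u v), hl]
  have htv : lcp u v = v.take m := by
    rw [List.prefix_iff_eq_take.mp (lcp_prefix_right u v), hl]
  have h1 : u.take (m+1) <+: lcp u v := by
    refine prefix_lcp _ _ _ (List.take_prefix _ u) ?_
    have : u.take (m+1) = v.take (m+1) := by
      rw [← List.take_concat_get' u m hmu, ← List.take_concat_get' v m hmv, heq, ← htu, htv]
    rw [this]; exact List.take_prefix _ v
  have := h1.length_le
  rw [hl, List.length_take, min_eq_left (by omega)] at this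
  omega

end Aux

section Aux2

abbrev LL := List (ℕ × Option ℕ)

theorem piX_length {S : Type*} (a : List (ℕ × Option S)) : (piX a).length = a.length :=
  List.length_map _

theorem piX_append {S : Type*} (a b : List (ℕ × Option S)) : piX (a ++ b) = piX a ++ piX b :=
  List.map_append

theorem piX_take {S : Type*} (a : List (ℕ × Option S)) (m : ℕ) :
    piX (a.take m) = (piX a).take m := List.map_take

theorem piX_drop {S : Type*} (a : List (ℕ × Option S)) (m : ℕ) :
    piX (a.drop m) = (piX a).drop m := List.map_drop

theorem piX_getElem {S : Type*} (a : List (ℕ × Option S)) (k : ℕ) (h : k < a.length) :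
    (piX a)[k]'(by rw [piX_length]; exact h) = a[k].1 := List.getElem_map _

theorem piX_prefix {S : Type*} {a b : List (ℕ × Option S)} (h : a <+: b) : piX a <+: piX b :=
  h.map _

theorem piX_dropLast {S : Type*} (a : List (ℕ × Option S)) :
    piX a.dropLast = (piX a).dropLast := List.map_dropLast

/-- membership in `GammaSet` via `getElem`. -/
theorem mem_gammaSet_iff {Γ : TreePlan} {S : Type*} {X : Set S} {a : List (ℕ × Option S)} :
    a ∈ GammaSet Γ X ↔ piX a ∈ Γ.nodes ∧ ∀ (k : ℕ) (hk : k < a.length),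
      (Γ.lab ((piX a).take (k + 1)) = false → a[k].2 = none) ∧
      (Γ.lab ((piX a).take (k + 1)) = true → ∃ x ∈ X, a[k].2 = some x) := Iff.rfl

/-- A set of lists closed under `dropLast` is prefix-closed. -/
theorem prefix_closed_of_dropLast {β : Type*} {s : Set (List β)}
    (hs : ∀ b ∈ s, b.dropLast ∈ s) :
    ∀ b, b ∈ s → ∀ q, q <+: b → q ∈ s := by
  intro b
  induction b using List.reverseRecOn with
  | nil => intro hb q hq; rwa [List.prefix_nil.mp hq]
  | append_singleton l x ih =>
    intro hb q hq
    rcases eq_or_lt_of_le hq.length_le with he | hl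
    · rwa [hq.eq_of_length he]
    · have hql : q <+: l := by
        refine List.prefix_of_prefix_length_le hq (List.prefix_append l [x]) ?_
        simp at hl ⊢; omega
      have hl' : l ∈ s := by simpa [List.dropLast_concat] using hs _ hb
      exact ih hl' q hql

theorem gammaSet_dropLast {Γ : TreePlan} (hΓ : IsTreePlan Γ) {S : Type*} {X : Set S}
    {a : List (ℕ × Option S)} (ha : a ∈ GammaSet Γ X) : a.dropLast ∈ GammaSet Γ X := by
  rw [mem_gammaSet_iff] at ha ⊢
  obtain ⟨hn, hc⟩ := ha
  constructor
  · rw [piX_dropLast]; exact hΓ.2.1 _ hn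
  · intro k hk
    have hk' : k < a.length := by
      have := a.length_dropLast ▸ hk; omega
    have hkk : k + 1 ≤ a.length - 1 := by
      have := a.length_dropLast ▸ hk; omega
    have e1 : (piX a.dropLast).take (k+1) = (piX a).take (k+1) := by
      rw [piX_dropLast, List.dropLast_eq_take, List.take_take,
        min_eq_left (by rw [piX_length]; omega)]
    have e2 : a.dropLast[k] = a[k]'hk' := (List.dropLast_prefix a).getElem hk
    rw [e1, e2]
    exact hc k hk'

theorem gammaSet_prefix {Γ : TreePlan} (hΓ : IsTreePlan Γ) {S : Type*} {X : Set S}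
    {a q : List (ℕ × Option S)} (ha : a ∈ GammaSet Γ X) (h : q <+: a) : q ∈ GammaSet Γ X :=
  prefix_closed_of_dropLast (fun _ hb => gammaSet_dropLast hΓ hb) a ha q h

theorem nil_mem_gammaSet {Γ : TreePlan} (hΓ : IsTreePlan Γ) {S : Type*} {X : Set S} :
    ([] : List (ℕ × Option S)) ∈ GammaSet Γ X := by
  rw [mem_gammaSet_iff]
  exact ⟨hΓ.1, fun k hk => absurd hk (by simp)⟩

theorem gammaSet_mono {Γ : TreePlan} {S : Type*} {X Y : Set S} (h : X ⊆ Y) :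
    GammaSet Γ X ⊆ GammaSet Γ Y := by
  intro a ha
  rw [mem_gammaSet_iff] at ha ⊢
  refine ⟨ha.1, fun k hk => ⟨(ha.2 k hk).1, fun ht => ?_⟩⟩
  obtain ⟨x, hx, he⟩ := (ha.2 k hk).2 ht
  exact ⟨x, h hx, he⟩

open Classical in
/-- Longest prefix of `b` lying in `s` (assuming `[] ∈ s`). -/
noncomputable def lip {β : Type*} (s : Set (List β)) : List β → List β
  | [] => []
  | x :: xs => if (x :: xs) ∈ s then x :: xs else lip s (x :: xs).dropLast
termination_by b => b.length
decreasing_by simp [List.length_dropLast]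

theorem lip_mem {β : Type*} {s : Set (List β)} (h0 : [] ∈ s) : ∀ b, lip s b ∈ s
  | [] => by rw [lip]; exact h0
  | x :: xs => by
    rw [lip]
    split
    · assumption
    · exact lip_mem h0 _
termination_by b => b.length
decreasing_by simp [List.length_dropLast]

theorem lip_prefix {β : Type*} (s : Set (List β)) : ∀ b, lip s b <+: b
  | [] => by rw [lip]
  | x :: xs => by
    rw [lip]
    split
    · exact List.prefix_rfl
    · exact (lip_prefix s _).trans (List.dropLast_prefix _)
termination_by b => b.length
decreasing_by simp [List.length_dropLast]

theorem lip_max {β : Type*} {s : Set (List β)} : ∀ {b q : List β}, q ∈ s → q <+: b → q <+: lip s b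
  | [], q, _, hq => by rw [lip]; exact hq
  | x :: xs, q, hqs, hq => by
    rw [lip]
    split
    · exact hq
    · next hns =>
      refine lip_max hqs ?_
      refine List.prefix_of_prefix_length_le hq (List.dropLast_prefix _) ?_
      have : q ≠ x :: xs := fun h => hns (h ▸ hqs)
      have hlt : q.length < (x :: xs).length := by
        rcases lt_or_eq_of_le hq.length_le with h | h
        · exact h
        · exact absurd (hq.eq_of_length h) this
      simp [List.length_dropLast] at hlt ⊢
      omega
termination_by b => b.length
decreasing_by simp [List.length_dropLast]

theorem lip_of_mem {β : Type*} {s : Set (List β)} {b : List β} (hb : b ∈ s) : lip s b = b :=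
  aux_prefix_antisymm (lip_prefix s b) (lip_max hb List.prefix_rfl)

end Aux2

/-- The shift of entries used to produce fresh values. -/
def shf (n₁ : ℕ) (e : ℕ × Option ℕ) : ℕ × Option ℕ := (e.1, e.2.map fun x => n₁ + x)

/-- The class `K(Γ)` (represented by its canonical members `Γ(n)`, `n ≥ 1`) has the
disjoint amalgamation property: given embeddings `f₁ : Γ(n₀) → Γ(n₁)` and
`f₂ : Γ(n₀) → Γ(n₂)`, there are `N` and embeddings `jᵢ : Γ(nᵢ) → Γ(N)` with
`j₁ ∘ f₁ = j₂ ∘ f₂` on `Γ(n₀)` and `j₁[Γ(n₁)] ∩ j₂[Γ(n₂)] = j₁[f₁[Γ(n₀)]]`. -/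
theorem disjoint_amalgamation (Γ : TreePlan) (hΓ : IsTreePlan Γ)
    (n₀ n₁ n₂ : ℕ) (hn₀ : 1 ≤ n₀) (hn₁ : 1 ≤ n₁) (hn₂ : 1 ≤ n₂)
    (f₁ f₂ : List (ℕ × Option ℕ) → List (ℕ × Option ℕ))
    (hf₁ : IsGEmb Γ (GammaN Γ n₀) (GammaN Γ n₁) f₁)
    (hf₂ : IsGEmb Γ (GammaN Γ n₀) (GammaN Γ n₂) f₂) :
    ∃ (N : ℕ) (j₁ j₂ : List (ℕ × Option ℕ) → List (ℕ × Option ℕ)),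
      1 ≤ N ∧
      IsGEmb Γ (GammaN Γ n₁) (GammaN Γ N) j₁ ∧
      IsGEmb Γ (GammaN Γ n₂) (GammaN Γ N) j₂ ∧
      (∀ a ∈ GammaN Γ n₀, j₁ (f₁ a) = j₂ (f₂ a)) ∧
      (j₁ '' GammaN Γ n₁) ∩ (j₂ '' GammaN Γ n₂) = j₁ '' (f₁ '' GammaN Γ n₀) := by
  classical
  -- notation
  set G₀ : Set LL := GammaN Γ n₀ with hG₀def
  set G₁ : Set LL := GammaN Γ n₁ with hG₁def
  set G₂ : Set LL := GammaN Γ n₂ with hG₂def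
  set Im : Set LL := f₂ '' G₀ with hImdef
  set inv : LL → LL := fun b => if h : b ∈ Im then h.choose else [] with hinvdef
  set g : LL → LL := fun b => f₁ (inv b) with hgdef
  set p : LL → LL := fun b => lip Im b with hpdef
  set j₂ : LL → LL := fun b => g (p b) ++ (b.drop (p b).length).map (shf n₁) with hj₂def
  -- basic membership facts
  have h0G₀ : ([] : LL) ∈ G₀ := nil_mem_gammaSet hΓ
  have hImnil : ([] : LL) ∈ Im := ⟨[], h0G₀, hf₂.map_root⟩
  have hImdrop : ∀ b ∈ Im, b.dropLast ∈ Im := by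
    rintro b ⟨a, ha, rfl⟩
    exact ⟨a.dropLast, gammaSet_dropLast hΓ ha, hf₂.map_pred a ha⟩
  have hImpre : ∀ b, b ∈ Im → ∀ q, q <+: b → q ∈ Im := prefix_closed_of_dropLast hImdrop
  have hG₀pre : ∀ a ∈ G₀, ∀ q, q <+: a → q ∈ G₀ := fun a ha q hq => gammaSet_prefix hΓ ha hq
  have hG₂pre : ∀ a ∈ G₂, ∀ q, q <+: a → q ∈ G₂ := fun a ha q hq => gammaSet_prefix hΓ ha hq
  have hpmem : ∀ b, p b ∈ Im := fun b => lip_mem hImnil b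
  have hppre : ∀ b, p b <+: b := fun b => lip_prefix Im b
  have hpmax : ∀ b q, q ∈ Im → q <+: b → q <+: p b := fun b q hq hqb => lip_max hq hqb
  have hpeq : ∀ b ∈ Im, p b = b := fun b hb => lip_of_mem hb
  -- facts about inv
  have hinvmem : ∀ b ∈ Im, inv b ∈ G₀ ∧ f₂ (inv b) = b := by
    intro b hb
    rw [hinvdef]
    simp only [dif_pos hb]
    exact ⟨hb.choose_spec.1, hb.choose_spec.2⟩
  have hinvf : ∀ a ∈ G₀, inv (f₂ a) = a := by
    intro a ha
    have hm : f₂ a ∈ Im := ⟨a, ha, rfl⟩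
    exact hf₂.inj _ (hinvmem _ hm).1 _ ha ((hinvmem _ hm).2.trans rfl)
  -- length facts for embeddings
  have hf₁len : ∀ a ∈ G₀, (f₁ a).length = a.length := by
    intro a ha
    rw [← piX_length, hf₁.map_P a ha, piX_length]
  have hf₂len : ∀ a ∈ G₀, (f₂ a).length = a.length := by
    intro a ha
    rw [← piX_length, hf₂.map_P a ha, piX_length]
  -- facts about g
  have hgf₂ : ∀ a ∈ G₀, g (f₂ a) = f₁ a := fun a ha => by rw [hgdef]; simp only []; rw [hinvf a ha]
  have hgmem : ∀ b ∈ Im, g b ∈ G₁ := fun b hb => hf₁.maps _ (hinvmem b hb).1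
  have hglen : ∀ b ∈ Im, (g b).length = b.length := by
    intro b hb
    rw [hgdef]
    simp only []
    rw [hf₁len _ (hinvmem b hb).1, ← hf₂len _ (hinvmem b hb).1, (hinvmem b hb).2]
  have hgpiX : ∀ b ∈ Im, piX (g b) = piX b := by
    intro b hb
    rw [hgdef]
    simp only []
    rw [hf₁.map_P _ (hinvmem b hb).1, ← hf₂.map_P _ (hinvmem b hb).1, (hinvmem b hb).2]
  have hgmono : ∀ u ∈ Im, ∀ v ∈ Im, u <+: v → g u <+: g v := by
    intro u hu v hv huv
    have h1 : inv u <+: inv v := by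
      apply (hf₂.map_le _ (hinvmem u hu).1 _ (hinvmem v hv).1).mpr
      rw [(hinvmem u hu).2, (hinvmem v hv).2]; exact huv
    exact (hf₁.map_le _ (hinvmem u hu).1 _ (hinvmem v hv).1).mp h1
  have hglcp : ∀ u ∈ Im, ∀ v ∈ Im, g (lcp u v) = lcp (g u) (g v) := by
    intro u hu v hv
    obtain ⟨hu0, hu2⟩ := hinvmem u hu
    obtain ⟨hv0, hv2⟩ := hinvmem v hv
    have hl : lcp u v = f₂ (lcp (inv u) (inv v)) := by
      rw [hf₂.map_meet _ hu0 _ hv0, hu2, hv2]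
    have hlmem : lcp (inv u) (inv v) ∈ G₀ := hG₀pre _ hu0 _ (lcp_prefix_left _ _)
    rw [hl, hgf₂ _ hlmem, hf₁.map_meet _ hu0 _ hv0]
  have hgdrop : ∀ u ∈ Im, g u.dropLast = (g u).dropLast := by
    intro u hu
    obtain ⟨hu0, hu2⟩ := hinvmem u hu
    have h1 : u.dropLast = f₂ (inv u).dropLast := by rw [hf₂.map_pred _ hu0, hu2]
    rw [h1, hgf₂ _ (gammaSet_dropLast hΓ hu0), hf₁.map_pred _ hu0]
  have hgnil : g [] = [] := by
    have h := hgf₂ [] h0G₀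
    rw [hf₂.map_root] at h
    rw [h, hf₁.map_root]
  -- structural facts about j₂
  have hplen : ∀ b : LL, (p b).length ≤ b.length := fun b => (hppre b).length_le
  have hj₂Im : ∀ b ∈ Im, j₂ b = g b := by
    intro b hb
    rw [hj₂def]
    simp only []
    rw [hpeq b hb, List.drop_length]
    simp
  have hjlen : ∀ b : LL, (j₂ b).length = b.length := by
    intro b
    rw [hj₂def]
    simp only [List.length_append, List.length_map, List.length_drop]
    rw [hglen _ (hpmem b)]
    have := hplen b
    omega
  have hjpiX : ∀ b : LL, piX (j₂ b) = piX b := by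
    intro b
    rw [hj₂def]
    simp only []
    rw [piX_append, hgpiX _ (hpmem b)]
    have e1 : piX ((b.drop (p b).length).map (shf n₁)) = piX (b.drop (p b).length) := by
      have hc : Prod.fst ∘ shf n₁ = (Prod.fst : ℕ × Option ℕ → ℕ) := funext fun e => rfl
      simp [piX, List.map_map, hc]
    rw [e1, piX_drop]
    have e2 : piX (p b) = (piX b).take (p b).length := by
      rw [List.prefix_iff_eq_take.mp (piX_prefix (hppre b)), piX_length]
    rw [e2]
    exact List.take_append_drop _ _
  have hjget1 : ∀ (b : LL) (k : ℕ), k < (p b).length →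
      ∀ (h1 : k < (j₂ b).length) (h2 : k < (g (p b)).length), (j₂ b)[k] = (g (p b))[k] := by
    intro b k hk h1 h2
    have : j₂ b = g (p b) ++ (b.drop (p b).length).map (shf n₁) := by rw [hj₂def]
    rw [List.getElem_of_eq this h1]
    exact List.getElem_append_left h2
  have hjget2 : ∀ (b : LL) (k : ℕ), (p b).length ≤ k →
      ∀ (hk : k < b.length) (h1 : k < (j₂ b).length), (j₂ b)[k] = shf n₁ b[k] := by
    intro b k hge hk h1
    have hgl : (g (p b)).length = (p b).length := hglen _ (hpmem b)
    have : j₂ b = g (p b) ++ (b.drop (p b).length).map (shf n₁) := by rw [hj₂def]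
    rw [List.getElem_of_eq this h1]
    rw [List.getElem_append_right (by omega : (g (p b)).length ≤ k)]
    have hx : k - (g (p b)).length < ((b.drop (p b).length).map (shf n₁)).length := by
      simp only [List.length_map, List.length_drop]
      omega
    have hidx : (p b).length + (k - (g (p b)).length) = k := by omega
    rw [List.getElem_map, List.getElem_drop]
    simp only [hidx]
  have hjnil : j₂ [] = [] := by
    rw [hj₂Im [] hImnil, hgnil]
  -- j₂ maps into Γ(n₁+n₂)
  have hjmem : ∀ b ∈ G₂, j₂ b ∈ GammaN Γ (n₁ + n₂) := by
    intro b hb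
    obtain ⟨hbn, hbc⟩ := mem_gammaSet_iff.mp hb
    refine mem_gammaSet_iff.mpr ?_
    constructor
    · rw [hjpiX b]; exact hbn
    · intro k hk
      have hkb : k < b.length := by rw [hjlen b] at hk; exact hk
      have hlabeq : (piX (j₂ b)).take (k+1) = (piX b).take (k+1) := by rw [hjpiX]
      by_cases hkm : k < (p b).length
      · obtain ⟨hgn, hgc⟩ := mem_gammaSet_iff.mp (hgmem _ (hpmem b))
        have hkg : k < (g (p b)).length := by rw [hglen _ (hpmem b)]; exact hkm
        have e2 : (piX (g (p b))).take (k+1) = (piX b).take (k+1) := by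
          rw [hgpiX _ (hpmem b)]
          exact aux_take_eq_of_prefix (piX_prefix (hppre b)) (by rw [piX_length]; omega)
        have hcond := hgc k hkg
        rw [e2] at hcond
        rw [hlabeq, hjget1 b k hkm hk hkg]
        refine ⟨hcond.1, fun ht => ?_⟩
        obtain ⟨x, hx, he⟩ := hcond.2 ht
        refine ⟨x, ?_, he⟩
        simp only [Set.mem_setOf_eq] at hx ⊢
        omega
      · have hcond := hbc k hkb
        rw [hlabeq, hjget2 b k (le_of_not_gt hkm) hkb hk]
        constructor
        · intro hf
          have := hcond.1 hf
          simp [shf, this]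
        · intro ht
          obtain ⟨x, hx, he⟩ := hcond.2 ht
          refine ⟨n₁ + x, ?_, ?_⟩
          · simp only [Set.mem_setOf_eq] at hx ⊢
            omega
          · simp [shf, he]
  -- monotonicity of j₂
  have happend_pre : ∀ (l u v : LL), u <+: v → l ++ u <+: l ++ v := by
    rintro l u v ⟨t, rfl⟩
    exact ⟨t, by rw [List.append_assoc]⟩
  have hdropmono : ∀ (u v : LL) (m : ℕ), m ≤ u.length → u <+: v → u.drop m <+: v.drop m := by
    rintro u v m hm ⟨t, rfl⟩
    rw [List.drop_append_of_le_length hm]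
    exact ⟨t, rfl⟩
  have hpstable : ∀ b₁ b₂ : LL, b₁ ∉ Im → b₁ <+: b₂ → p b₂ = p b₁ := by
    intro b₁ b₂ hb₁ h12
    have hpb₂b₁ : p b₂ <+: b₁ := by
      rcases le_or_gt (p b₂).length b₁.length with hle | hlt
      · exact List.prefix_of_prefix_length_le (hppre b₂) h12 hle
      · exfalso
        have : b₁ <+: p b₂ := List.prefix_of_prefix_length_le h12 (hppre b₂) (le_of_lt hlt)
        exact hb₁ (hImpre _ (hpmem b₂) _ this)
    refine aux_prefix_antisymm (hpmax b₁ _ (hpmem b₂) hpb₂b₁) (hpmax b₂ _ (hpmem b₁) ((hppre b₁).trans h12))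
  have hmono : ∀ b₁ ∈ G₂, ∀ b₂ ∈ G₂, b₁ <+: b₂ → j₂ b₁ <+: j₂ b₂ := by
    intro b₁ _ b₂ _ h12
    by_cases hb₁ : b₁ ∈ Im
    · have h1 : b₁ <+: p b₂ := hpmax b₂ _ hb₁ h12
      have h2 : g b₁ <+: g (p b₂) := hgmono _ hb₁ _ (hpmem b₂) h1
      rw [hj₂Im _ hb₁]
      refine h2.trans ?_
      rw [hj₂def]
      exact List.prefix_append _ _
    · have hpp : p b₂ = p b₁ := hpstable b₁ b₂ hb₁ h12
      rw [hj₂def]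
      simp only [hpp]
      refine happend_pre _ _ _ ?_
      exact (hdropmono b₁ b₂ _ (hplen b₁) h12).map _
  -- j₂ preserves first coordinates entrywise
  have hfstj : ∀ (u : LL) (k : ℕ) (hk : k < u.length) (hk2 : k < (j₂ u).length),
      (j₂ u)[k].1 = u[k].1 := by
    intro u k hk hk2
    have e1 := piX_getElem (j₂ u) k hk2
    have e2 := piX_getElem u k hk
    rw [← e1, ← e2]
    simp only [hjpiX u]
  -- the key divergence lemma
  have hdiff : ∀ b ∈ G₂, ∀ b' ∈ G₂, ∀ m (hmb : m < b.length) (hmb' : m < b'.length),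
      b.take m = b'.take m → b[m] ≠ b'[m] →
      ∀ (h1 : m < (j₂ b).length) (h2 : m < (j₂ b').length), (j₂ b)[m] ≠ (j₂ b')[m] := by
    intro b hb b' hb' m hmb hmb' htake hne h1 h2
    by_cases hfst : b[m].1 = b'[m].1
    swap
    · intro heq
      exact hfst (by rw [← hfstj b m hmb h1, ← hfstj b' m hmb' h2, heq])
    · have hsnd : b[m].2 ≠ b'[m].2 := fun h => hne (Prod.ext hfst h)
      obtain ⟨hbn, hbc⟩ := mem_gammaSet_iff.mp hb
      obtain ⟨hbn', hbc'⟩ := mem_gammaSet_iff.mp hb'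
      have hσ' : (piX b').take (m+1) = (piX b).take (m+1) := by
        rw [← List.take_concat_get' (piX b) m (by rw [piX_length]; exact hmb),
          ← List.take_concat_get' (piX b') m (by rw [piX_length]; exact hmb'),
          piX_getElem b m hmb, piX_getElem b' m hmb', hfst, ← piX_take, ← piX_take, htake]
      cases hlb : Γ.lab ((piX b).take (m+1)) with
      | false =>
        exfalso
        apply hsnd
        rw [(hbc m hmb).1 hlb, (hbc' m hmb').1 (by rw [hσ']; exact hlb)]
      | true =>
        obtain ⟨x, hx, hbx⟩ := (hbc m hmb).2 hlb
        obtain ⟨x', hx', hbx'⟩ := (hbc' m hmb').2 (by rw [hσ']; exact hlb)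
        simp only [Set.mem_setOf_eq] at hx hx'
        have hxx' : x ≠ x' := fun h => hsnd (by rw [hbx, hbx', h])
        -- some (g P)[m]-data in the cases where m < (p ·).length
        have hginfo : ∀ c : LL, c ∈ G₂ → ∀ (hm1 : m < c.length), m < (p c).length →
            (piX c).take (m+1) = (piX b).take (m+1) →
            ∃ y, y < n₁ ∧ ∀ (hg : m < (g (p c)).length), (g (p c))[m].2 = some y := by
          intro c hc hm1 hm2 hct
          obtain ⟨hgn, hgc⟩ := mem_gammaSet_iff.mp (hgmem _ (hpmem c))
          have hmg : m < (g (p c)).length := by rw [hglen _ (hpmem c)]; exact hm2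
          have hnode : (piX (g (p c))).take (m+1) = (piX b).take (m+1) := by
            rw [hgpiX _ (hpmem c), ← hct]
            exact aux_take_eq_of_prefix (piX_prefix (hppre c)) (by rw [piX_length]; omega)
          obtain ⟨y, hy, hye⟩ := (hgc m hmg).2 (by rw [hnode]; exact hlb)
          simp only [Set.mem_setOf_eq] at hy
          exact ⟨y, hy, fun _ => hye⟩
        rcases lt_or_ge m (p b).length with hpb | hpb <;>
          rcases lt_or_ge m (p b').length with hpb' | hpb'
        · -- both inside the image prefixes
          have hPp : (p b).take m = (p b').take m := by
            rw [aux_take_eq_of_prefix (hppre b) (le_of_lt hpb), htake,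
              ← aux_take_eq_of_prefix (hppre b') (le_of_lt hpb')]
          have hPm : (p b)[m] = b[m] := (hppre b).getElem hpb
          have hPm' : (p b')[m] = b'[m] := (hppre b').getElem hpb'
          have hPne : (p b)[m] ≠ (p b')[m] := by rw [hPm, hPm']; exact hne
          have hlcpP : lcp (p b) (p b') = (p b).take m := lcp_eq_take hPp hpb hpb' hPne
          have hlcpmem : lcp (p b) (p b') ∈ Im :=
            hImpre _ (hpmem b) _ (lcp_prefix_left _ _)
          have hmg : m < (g (p b)).length := by rw [hglen _ (hpmem b)]; exact hpb
          have hmg' : m < (g (p b')).length := by rw [hglen _ (hpmem b')]; exact hpb'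
          have hglm : (lcp (g (p b)) (g (p b'))).length = m := by
            rw [← hglcp _ (hpmem b) _ (hpmem b'), hglen _ hlcpmem, hlcpP, List.length_take]
            omega
          have hgne := lcp_get_ne hglm hmg hmg'
          rw [hjget1 b m hpb h1 hmg, hjget1 b' m hpb' h2 hmg']
          exact hgne
        · -- m < |p b|, m ≥ |p b'|
          obtain ⟨y, hy, hye⟩ := hginfo b hb hmb hpb rfl
          have hmg : m < (g (p b)).length := by rw [hglen _ (hpmem b)]; exact hpb
          rw [hjget1 b m hpb h1 hmg, hjget2 b' m hpb' hmb' h2]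
          intro heq
          have h2nd := congrArg Prod.snd heq
          rw [hye hmg] at h2nd
          simp only [shf, hbx', Option.map_some] at h2nd
          rw [Option.some_inj] at h2nd
          omega
        · -- m ≥ |p b|, m < |p b'|
          obtain ⟨y, hy, hye⟩ := hginfo b' hb' hmb' hpb' hσ'
          have hmg' : m < (g (p b')).length := by rw [hglen _ (hpmem b')]; exact hpb'
          rw [hjget2 b m hpb hmb h1, hjget1 b' m hpb' h2 hmg']
          intro heq
          have h2nd := congrArg Prod.snd heq
          rw [hye hmg'] at h2nd
          simp only [shf, hbx, Option.map_some] at h2nd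
          rw [Option.some_inj] at h2nd
          omega
        · -- both outside
          rw [hjget2 b m hpb hmb h1, hjget2 b' m hpb' hmb' h2]
          intro heq
          have h2nd := congrArg Prod.snd heq
          simp only [shf, hbx, hbx', Option.map_some] at h2nd
          rw [Option.some_inj] at h2nd
          exact hxx' (by omega)
  -- j₂ preserves meets
  have hmeet : ∀ b ∈ G₂, ∀ b' ∈ G₂, j₂ (lcp b b') = lcp (j₂ b) (j₂ b') := by
    intro b hb b' hb'
    have hcb : lcp b b' <+: b := lcp_prefix_left b b'
    have hcb' : lcp b b' <+: b' := lcp_prefix_right b b'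
    have hcG : lcp b b' ∈ G₂ := hG₂pre b hb _ hcb
    have hj1 : j₂ (lcp b b') <+: j₂ b := hmono _ hcG _ hb hcb
    have hj2 : j₂ (lcp b b') <+: j₂ b' := hmono _ hcG _ hb' hcb'
    rcases eq_or_lt_of_le hcb.length_le with he | hlt
    · have hcbe : lcp b b' = b := hcb.eq_of_length he
      have : b <+: b' := hcbe ▸ hcb'
      rw [hcbe, lcp_eq_left (hmono _ hb _ hb' this)]
    rcases eq_or_lt_of_le hcb'.length_le with he' | hlt'
    · have hcbe : lcp b b' = b' := hcb'.eq_of_length he'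
      have : b' <+: b := hcbe ▸ hcb
      rw [hcbe, lcp_eq_right (hmono _ hb' _ hb this)]
    · have htake : b.take (lcp b b').length = b'.take (lcp b b').length := by
        rw [← List.prefix_iff_eq_take.mp hcb, ← List.prefix_iff_eq_take.mp hcb']
      have hne : b[(lcp b b').length]'hlt ≠ b'[(lcp b b').length]'hlt' :=
        lcp_get_ne rfl hlt hlt'
      have hj1' : (lcp b b').length < (j₂ b).length := by rw [hjlen]; exact hlt
      have hj2' : (lcp b b').length < (j₂ b').length := by rw [hjlen]; exact hlt'
      have hdne := hdiff b hb b' hb' (lcp b b').length hlt hlt' htake hne hj1' hj2'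
      have e1 : j₂ (lcp b b') = (j₂ b).take (lcp b b').length := by
        rw [List.prefix_iff_eq_take.mp hj1, hjlen]
      have e2 : j₂ (lcp b b') = (j₂ b').take (lcp b b').length := by
        rw [List.prefix_iff_eq_take.mp hj2, hjlen]
      rw [lcp_eq_take (by rw [← e1, ← e2]) hj1' hj2' hdne, ← e1]
  -- j₂ reflects prefixes
  have hrefl : ∀ b ∈ G₂, ∀ b' ∈ G₂, j₂ b <+: j₂ b' → b <+: b' := by
    intro b hb b' hb' h
    have h1 : j₂ (lcp b b') = j₂ b := by rw [hmeet b hb b' hb', lcp_eq_left h]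
    have h2 : (lcp b b').length = b.length := by rw [← hjlen (lcp b b'), h1, hjlen]
    have := (lcp_prefix_left b b').eq_of_length h2
    rw [← this]
    exact lcp_prefix_right b b'
  -- j₂ commutes with dropLast
  have hdrop_dropLast : ∀ (l : LL) (m : ℕ), (l.dropLast).drop m = (l.drop m).dropLast := by
    intro l m
    rw [List.dropLast_eq_take, List.dropLast_eq_take, List.drop_take, List.length_drop]
    congr 1
    omega
  have hjpred : ∀ b ∈ G₂, j₂ b.dropLast = (j₂ b).dropLast := by
    intro b hb
    by_cases hbI : b ∈ Im
    · rw [hj₂Im _ hbI, hj₂Im _ (hImdrop _ hbI), hgdrop _ hbI]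
    · have hplt : (p b).length < b.length := by
        rcases lt_or_eq_of_le (hplen b) with h | h
        · exact h
        · exact absurd ((hppre b).eq_of_length h ▸ hpmem b) hbI
      have hpd : p b.dropLast = p b := by
        have h1 : p b <+: b.dropLast := by
          refine List.prefix_of_prefix_length_le (hppre b) (List.dropLast_prefix b) ?_
          rw [List.length_dropLast]
          omega
        exact aux_prefix_antisymm
          (hpmax b _ (hpmem b.dropLast) ((hppre b.dropLast).trans (List.dropLast_prefix b)))
          (hpmax b.dropLast _ (hpmem b) h1)
      rw [hj₂def]
      simp only [hpd]
      have hne : (b.drop (p b).length).map (shf n₁) ≠ [] := by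
        refine List.ne_nil_of_length_pos ?_
        simp only [List.length_map, List.length_drop]
        omega
      rw [List.dropLast_append_of_ne_nil hne, ← List.map_dropLast, hdrop_dropLast]

  -- extension lemma: a one-step extension by a `none`-entry of an element of `Im` is in `Im`
  have hext : ∀ P ∈ Im, ∀ q ∈ G₂, P <+: q → q.length = P.length + 1 →
      (∀ (h : P.length < q.length), q[P.length].2 = none) → q ∈ Im := by
    rintro P ⟨a, ha, rfl⟩ q hq hPq hlen hnone
    obtain ⟨hqn, hqc⟩ := mem_gammaSet_iff.mp hq
    set m := (f₂ a).length with hmdef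
    have hma : a.length = m := (hf₂len a ha).symm
    have hmq : m < q.length := by omega
    have hnone' := hnone hmq
    have hpiXa : piX a = (piX q).take m := by
      rw [← hf₂.map_P a ha, List.prefix_iff_eq_take.mp (piX_prefix hPq), piX_length]
    have hqfull : (piX q).take (m+1) = piX q := by
      apply List.take_of_length_le
      rw [piX_length]
      omega
    have hlabq : Γ.lab (piX q) = false := by
      cases hl : Γ.lab (piX q) with
      | false => rfl
      | true =>
        obtain ⟨x, _, hx⟩ := (hqc m hmq).2 (by rw [hqfull]; exact hl)
        rw [hnone'] at hx
        cases hx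
    set a' : LL := a ++ [(q[m].1, none)] with ha'def
    have hpiXa' : piX a' = piX q := by
      rw [ha'def, piX_append, hpiXa]
      have e0 : piX [((q[m].1 : ℕ), (none : Option ℕ))] = [(piX q)[m]'(by rw [piX_length]; omega)] := by
        rw [piX_getElem q m hmq]
        rfl
      rw [e0, List.take_concat_get' (piX q) m (by rw [piX_length]; omega), hqfull]
    have hlena' : a'.length = a.length + 1 := by rw [ha'def, List.length_append, List.length_singleton]
    have ha' : a' ∈ G₀ := by
      refine mem_gammaSet_iff.mpr ⟨hpiXa' ▸ hqn, ?_⟩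
      intro k hk
      rcases lt_or_ge k a.length with hka | hka
      · have e1 : a'[k] = a[k] := List.getElem_append_left hka
        have e2 : (piX a').take (k+1) = (piX a).take (k+1) := by
          refine (aux_take_eq_of_prefix (piX_prefix ?_) (by rw [piX_length]; omega)).symm
          rw [ha'def]
          exact List.prefix_append _ _
        rw [e1, e2]
        exact (mem_gammaSet_iff.mp ha).2 k hka
      · have hkeq : k = a.length := by omega
        subst hkeq
        have e1 : a'[a.length]'hk = (q[m].1, none) := by
          simp [ha'def]
        have e2 : (piX a').take (a.length+1) = piX q := by
          rw [← hpiXa']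
          apply List.take_of_length_le
          rw [piX_length]
          omega
        rw [e1, e2]
        refine ⟨fun _ => rfl, fun ht => absurd ht (by rw [hlabq]; simp)⟩
    -- show f₂ a' = q
    have hf₂a'G : f₂ a' ∈ G₂ := hf₂.maps a' ha'
    have hlenf' : (f₂ a').length = m + 1 := by rw [hf₂len a' ha', hlena', hma]
    have hdl : (f₂ a').dropLast = f₂ a := by
      rw [← hf₂.map_pred a' ha', ha'def, List.dropLast_concat]
    have hqdl : q.dropLast = f₂ a := by
      rw [List.dropLast_eq_take, hlen]
      simp only [Nat.add_sub_cancel]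
      exact (List.prefix_iff_eq_take.mp hPq).symm
    have hpiXf' : piX (f₂ a') = piX q := by rw [hf₂.map_P a' ha', hpiXa']
    have hmf' : m < (f₂ a').length := by omega
    have hgetf' : (f₂ a')[m] = q[m] := by
      have hfst : (f₂ a')[m].1 = q[m].1 := by
        rw [← piX_getElem (f₂ a') m hmf', ← piX_getElem q m hmq]
        simp only [hpiXf']
      have hfull' : (piX (f₂ a')).take (m+1) = piX q := by rw [hpiXf', hqfull]
      have hsnd : (f₂ a')[m].2 = none := by
        refine ((mem_gammaSet_iff.mp hf₂a'G).2 m hmf').1 ?_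
        rw [hfull']
        exact hlabq
      exact Prod.ext hfst (by rw [hsnd, hnone'])
    have hfq : f₂ a' = q := by
      have hsingle : ∀ (l : LL) (n : ℕ) (hl : l.length = n + 1),
          l = l.dropLast ++ [l[n]'(by rw [hl]; exact Nat.lt_succ_self n)] := by
        intro l n hl
        apply List.ext_getElem
        · simp only [List.length_append, List.length_dropLast, List.length_singleton, hl]
          omega
        · intro i h1 h2
          by_cases hi : i < n
          · rw [List.getElem_append_left (by rw [List.length_dropLast, hl]; omega)]
            exact (List.getElem_dropLast ..).symm
          · have hin : i = n := by omega
            subst hin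
            rw [List.getElem_append_right (by rw [List.length_dropLast, hl]; omega)]
            simp [List.length_dropLast, hl]
      rw [hsingle (f₂ a') m hlenf', hsingle q m hlen, hdl, hqdl, hgetf']
    exact ⟨a', ha', hfq⟩
    -- for b outside the image, the entry right after `p b` carries a genuine value
  have hsome : ∀ b ∈ G₂, b ∉ Im → ∀ (hlt : (p b).length < b.length),
      ∃ x, x < n₂ ∧ b[(p b).length].2 = some x := by
    intro b hb hbI hlt
    obtain ⟨hbn, hbc⟩ := mem_gammaSet_iff.mp hb
    have hnotnone : b[(p b).length].2 ≠ none := by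
      intro hnone
      have hq : b.take ((p b).length + 1) ∈ G₂ := hG₂pre b hb _ (List.take_prefix _ _)
      have hqlen : (b.take ((p b).length + 1)).length = (p b).length + 1 := by
        rw [List.length_take]
        omega
      have hpq : p b <+: b.take ((p b).length + 1) :=
        List.prefix_of_prefix_length_le (hppre b) (List.take_prefix _ _) (by omega)
      have hqIm : b.take ((p b).length + 1) ∈ Im := by
        refine hext (p b) (hpmem b) _ hq hpq hqlen ?_
        intro h
        have e : (b.take ((p b).length + 1))[(p b).length]'(by omega) = b[(p b).length] :=
          List.getElem_take ..
        rw [e, hnone]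
      have := (hpmax b _ hqIm (List.take_prefix _ _)).length_le
      rw [hqlen] at this
      omega
    cases hl : Γ.lab ((piX b).take ((p b).length + 1)) with
    | false => exact absurd ((hbc _ hlt).1 hl) hnotnone
    | true =>
      obtain ⟨x, hx, hxe⟩ := (hbc _ hlt).2 hl
      simp only [Set.mem_setOf_eq] at hx
      exact ⟨x, hx, hxe⟩
  -- assemble everything
  refine ⟨n₁ + n₂, id, j₂, by omega, ?_, ?_, ?_, ?_⟩
  · -- j₁ = id is an embedding Γ(n₁) → Γ(n₁+n₂)
    exact { maps := fun a ha => gammaSet_mono (fun x hx => by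
              simp only [Set.mem_setOf_eq] at hx ⊢; omega) ha
            inj := fun a _ b _ h => h
            map_root := rfl
            map_le := fun _ _ _ _ => Iff.rfl
            map_pred := fun _ _ => rfl
            map_meet := fun _ _ _ _ => rfl
            map_P := fun _ _ => rfl }
  · -- j₂ is an embedding Γ(n₂) → Γ(n₁+n₂)
    exact { maps := hjmem
            inj := fun a ha b hb h =>
              aux_prefix_antisymm (hrefl a ha b hb (h ▸ List.prefix_rfl))
                (hrefl b hb a ha (h ▸ List.prefix_rfl))
            map_root := hjnil
            map_le := fun a ha b hb => ⟨hmono a ha b hb, hrefl a ha b hb⟩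
            map_pred := hjpred
            map_meet := hmeet
            map_P := fun a _ => hjpiX a }
  · -- commutativity
    intro a ha
    show f₁ a = j₂ (f₂ a)
    rw [hj₂Im _ ⟨a, ha, rfl⟩, hgf₂ a ha]
  · -- disjointness
    simp only [Set.image_id]
    ext c
    constructor
    · rintro ⟨hc1, b, hb, rfl⟩
      by_cases hbI : b ∈ Im
      · obtain ⟨a, ha, rfl⟩ := hbI
        exact ⟨a, ha, ((hj₂Im _ ⟨a, ha, rfl⟩).trans (hgf₂ a ha)).symm⟩
      · exfalso
        have hplt : (p b).length < b.length := by
          rcases lt_or_eq_of_le (hplen b) with h | h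
          · exact h
          · exact absurd ((hppre b).eq_of_length h ▸ hpmem b) hbI
        obtain ⟨x, hx, hbx⟩ := hsome b hb hbI hplt
        have hjb : (p b).length < (j₂ b).length := by rw [hjlen]; omega
        have hget := hjget2 b (p b).length le_rfl hplt hjb
        obtain ⟨hcn, hcc⟩ := mem_gammaSet_iff.mp hc1
        have hnode : (piX (j₂ b)).take ((p b).length + 1) = (piX b).take ((p b).length + 1) := by
          rw [hjpiX]
        obtain ⟨hbn, hbc⟩ := mem_gammaSet_iff.mp hb
        cases hl : Γ.lab ((piX b).take ((p b).length + 1)) with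
        | false =>
          have := (hbc _ hplt).1 hl
          rw [this] at hbx
          cases hbx
        | true =>
          obtain ⟨y, hy, hye⟩ := (hcc _ hjb).2 (by rw [hnode]; exact hl)
          simp only [Set.mem_setOf_eq] at hy
          rw [hget] at hye
          simp only [shf, hbx, Option.map_some] at hye
          rw [Option.some_inj] at hye
          omega
    · rintro ⟨a, ha, rfl⟩
      refine ⟨hf₁.maps a ha, f₂ a, hf₂.maps a ha, ?_⟩
      rw [hj₂Im _ ⟨a, ha, rfl⟩, hgf₂ a ha]
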